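/- arXiv:2308.05442 — 5 statements merged into one kernel-verified Lean document; each statement's English description precedes it below -/
import Mathlib

section
/- Let G be a (P3 ∪ P2, house)-free graph such that every proper induced subgraph G' of G satisfies χ(G') ≤ 2ω(G'), while χ(G) > 2ω(G). Then G has no good subgraph. That is, there is no induced subgraph H of G with χ(H) ≤ ω(H) such that, setting I = {v ∈ V(G) \ V(H) : v has no neighbor in V(H)}, R = {v ∈ V(G) \ V(H) : v is adjacent to every vertex of V(H)}, and T = V(G) \ (V(H) ∪ I ∪ R), one has χ(G[I]) ≤ χ(H) and χ(G[T]) ≤ χ(H). -/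
open SimpleGraph

/-- The disjoint union of a path on 3 vertices and a path on 2 vertices,
with edges `01`, `12` and `34`. -/
def P3uP2 : SimpleGraph (Fin 5) :=
  SimpleGraph.fromEdgeSet {s(0, 1), s(1, 2), s(3, 4)}

/-- The house graph: the complement of the path on 5 vertices. -/
def house : SimpleGraph (Fin 5) := (SimpleGraph.pathGraph 5)ᶜ

/-- `G` has no induced subgraph isomorphic to `H`. -/
def IsInducedFree {V : Type*} {W : Type*} (G : SimpleGraph V) (H : SimpleGraph W) : Prop :=
  IsEmpty (H ↪g G)

/-- The vertex set `H` induces a *good subgraph* of `G`: the induced subgraph `G[H]`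
satisfies `χ(G[H]) ≤ ω(G[H])`, and with `I` the set of vertices outside `H` with no
neighbor in `H` and `T` the set of vertices outside `H` having both a neighbor and a
non-neighbor in `H`, we have `χ(G[I]) ≤ χ(G[H])` and `χ(G[T]) ≤ χ(G[H])`. -/
def IsGoodSubgraph {V : Type*} (G : SimpleGraph V) (H : Set V) : Prop :=
  (G.induce H).chromaticNumber ≤ ((G.induce H).cliqueNum : ℕ∞) ∧
  (G.induce {u | u ∉ H ∧ ∀ h ∈ H, ¬ G.Adj u h}).chromaticNumber ≤
    (G.induce H).chromaticNumber ∧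
  (G.induce {u | u ∉ H ∧ (∃ h ∈ H, G.Adj u h) ∧ ∃ h ∈ H, ¬ G.Adj u h}).chromaticNumber ≤
    (G.induce H).chromaticNumber

theorem no_good_subgraph_of_minimal_counterexample
    {V : Type*} [Fintype V] (G : SimpleGraph V)
    (h1 : IsInducedFree G P3uP2) (h2 : IsInducedFree G house)
    (hmin : ∀ s : Set V, s ≠ Set.univ →
      (G.induce s).chromaticNumber ≤ 2 * ((G.induce s).cliqueNum : ℕ∞))
    (hG : 2 * (G.cliqueNum : ℕ∞) < G.chromaticNumber) :
    ∀ H : Set V, ¬ IsGoodSubgraph G H := by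
  intro H hgood
  classical
  obtain ⟨hχω, hI, hT⟩ := hgood
  set Is : Set V := {u | u ∉ H ∧ ∀ h ∈ H, ¬ G.Adj u h} with hIs
  set Ts : Set V := {u | u ∉ H ∧ (∃ h ∈ H, G.Adj u h) ∧ ∃ h ∈ H, ¬ G.Adj u h} with hTs
  set Rs : Set V := {u | u ∉ H ∧ ∀ h ∈ H, G.Adj u h} with hRs
  by_cases hHe : H = ∅
  · -- degenerate case: H empty, then I = univ and χ(G) = 0
    have hHcol : (G.induce H).Colorable 0 := by
      subst hHe
      exact ⟨⟨fun v => (v.2.elim : Fin 0), fun {a b} h => (a.2.elim : _)⟩⟩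
    have hIcol : (G.induce Is).Colorable 0 :=
      chromaticNumber_le_iff_colorable.mp
        (hI.trans (by exact_mod_cast chromaticNumber_le_iff_colorable.mpr hHcol))
    have hIu : Is = Set.univ := by
      subst hHe
      ext u; simp [hIs]
    have hGcol : G.Colorable 0 := by
      rw [hIu] at hIcol
      exact Colorable.of_hom G.induceUnivIso.symm.toEmbedding.toHom hIcol
    have h0 : G.chromaticNumber ≤ ((0 : ℕ) : ℕ∞) :=
      chromaticNumber_le_iff_colorable.mpr hGcol
    have := hG.trans_le h0
    simp at this
  · obtain ⟨v0, hv0⟩ := Set.nonempty_iff_ne_empty.mpr hHe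
    set k := (G.induce H).cliqueNum with hk
    set r := (G.induce Rs).cliqueNum with hr
    -- colorability facts
    have hHk : (G.induce H).Colorable k := chromaticNumber_le_iff_colorable.mp hχω
    have hIk : (G.induce Is).Colorable k :=
      chromaticNumber_le_iff_colorable.mp (hI.trans hχω)
    have hTk : (G.induce Ts).Colorable k :=
      chromaticNumber_le_iff_colorable.mp (hT.trans hχω)
    have hRne : Rs ≠ Set.univ := by
      intro hco
      have : v0 ∈ Rs := hco ▸ Set.mem_univ v0
      exact this.1 hv0
    have hRk : (G.induce Rs).Colorable (2 * r) := by
      refine chromaticNumber_le_iff_colorable.mp ?_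
      refine (hmin Rs hRne).trans_eq ?_
      push_cast
      ring
    obtain ⟨CH, hCH⟩ := (colorable_iff_exists_bdd_nat_coloring k).mp hHk
    obtain ⟨CI, hCI⟩ := (colorable_iff_exists_bdd_nat_coloring k).mp hIk
    obtain ⟨CT, hCT⟩ := (colorable_iff_exists_bdd_nat_coloring k).mp hTk
    obtain ⟨CR, hCR⟩ := (colorable_iff_exists_bdd_nat_coloring (2 * r)).mp hRk
    have hmem : ∀ v : V, v ∉ H → v ∉ Is → v ∉ Ts → v ∈ Rs := by
      intro v hv1 hv2 hv3
      simp only [hIs, Set.mem_setOf_eq, not_and, not_forall] at hv2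
      obtain ⟨a, ha, hadj⟩ := hv2 hv1
      refine ⟨hv1, fun h hh => ?_⟩
      by_contra hnadj
      exact hv3 ⟨hv1, ⟨a, ha, not_not.mp hadj⟩, ⟨h, hh, hnadj⟩⟩
    let F : V → ℕ := fun v =>
      if hv : v ∈ H then CH ⟨v, hv⟩
      else if hv2 : v ∈ Is then CI ⟨v, hv2⟩
      else if hv3 : v ∈ Ts then k + CT ⟨v, hv3⟩
      else 2 * k + CR ⟨v, hmem v hv hv2 hv3⟩
    have hFH : ∀ v (hv : v ∈ H), F v = CH ⟨v, hv⟩ := fun v hv => dif_pos hv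
    have hFI : ∀ v (hv1 : v ∉ H) (hv : v ∈ Is), F v = CI ⟨v, hv⟩ := by
      intro v hv1 hv
      simp only [F, dif_neg hv1, dif_pos hv]
    have hFT : ∀ v (hv1 : v ∉ H) (hv2 : v ∉ Is) (hv : v ∈ Ts),
        F v = k + CT ⟨v, hv⟩ := by
      intro v hv1 hv2 hv
      simp only [F, dif_neg hv1, dif_neg hv2, dif_pos hv]
    have hFR : ∀ v (hv1 : v ∉ H) (hv2 : v ∉ Is) (hv3 : v ∉ Ts),
        F v = 2 * k + CR ⟨v, hmem v hv1 hv2 hv3⟩ := by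
      intro v hv1 hv2 hv3
      simp only [F, dif_neg hv1, dif_neg hv2, dif_neg hv3]
    -- validity of F
    have hFvalid : ∀ {u v : V}, G.Adj u v → F u ≠ F v := by
      intro u v hadj heq
      by_cases hu1 : u ∈ H <;> by_cases hv1 : v ∈ H
      · -- both in H
        rw [hFH u hu1, hFH v hv1] at heq
        exact CH.valid (show (G.induce H).Adj ⟨u, hu1⟩ ⟨v, hv1⟩ from hadj) heq
      · by_cases hv2 : v ∈ Is
        · exact hv2.2 u hu1 hadj.symm
        by_cases hv3 : v ∈ Ts
        · rw [hFH u hu1, hFT v hv1 hv2 hv3] at heq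
          have := hCH ⟨u, hu1⟩; omega
        · rw [hFH u hu1, hFR v hv1 hv2 hv3] at heq
          have := hCH ⟨u, hu1⟩; omega
      · by_cases hu2 : u ∈ Is
        · exact hu2.2 v hv1 hadj
        by_cases hu3 : u ∈ Ts
        · rw [hFH v hv1, hFT u hu1 hu2 hu3] at heq
          have := hCH ⟨v, hv1⟩; omega
        · rw [hFH v hv1, hFR u hu1 hu2 hu3] at heq
          have := hCH ⟨v, hv1⟩; omega
      · by_cases hu2 : u ∈ Is <;> by_cases hv2 : v ∈ Is
        · rw [hFI u hu1 hu2, hFI v hv1 hv2] at heq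
          exact CI.valid (show (G.induce Is).Adj ⟨u, hu2⟩ ⟨v, hv2⟩ from hadj) heq
        · by_cases hv3 : v ∈ Ts
          · rw [hFI u hu1 hu2, hFT v hv1 hv2 hv3] at heq
            have := hCI ⟨u, hu2⟩; omega
          · rw [hFI u hu1 hu2, hFR v hv1 hv2 hv3] at heq
            have := hCI ⟨u, hu2⟩; omega
        · by_cases hu3 : u ∈ Ts
          · rw [hFI v hv1 hv2, hFT u hu1 hu2 hu3] at heq
            have := hCI ⟨v, hv2⟩; omega
          · rw [hFI v hv1 hv2, hFR u hu1 hu2 hu3] at heq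
            have := hCI ⟨v, hv2⟩; omega
        · by_cases hu3 : u ∈ Ts <;> by_cases hv3 : v ∈ Ts
          · rw [hFT u hu1 hu2 hu3, hFT v hv1 hv2 hv3] at heq
            have : CT ⟨u, hu3⟩ = CT ⟨v, hv3⟩ := by omega
            exact CT.valid (show (G.induce Ts).Adj ⟨u, hu3⟩ ⟨v, hv3⟩ from hadj) this
          · rw [hFT u hu1 hu2 hu3, hFR v hv1 hv2 hv3] at heq
            have := hCT ⟨u, hu3⟩; omega
          · rw [hFT v hv1 hv2 hv3, hFR u hu1 hu2 hu3] at heq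
            have := hCT ⟨v, hv3⟩; omega
          · rw [hFR u hu1 hu2 hu3, hFR v hv1 hv2 hv3] at heq
            have : CR ⟨u, hmem u hu1 hu2 hu3⟩ = CR ⟨v, hmem v hv1 hv2 hv3⟩ := by omega
            exact CR.valid
              (show (G.induce Rs).Adj ⟨u, hmem u hu1 hu2 hu3⟩ ⟨v, hmem v hv1 hv2 hv3⟩ from hadj)
              this
    have hFlt : ∀ v, F v < 2 * k + 2 * r := by
      intro v
      by_cases hv1 : v ∈ H
      · rw [hFH v hv1]; have := hCH ⟨v, hv1⟩; omega
      by_cases hv2 : v ∈ Is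
      · rw [hFI v hv1 hv2]; have := hCI ⟨v, hv2⟩; omega
      by_cases hv3 : v ∈ Ts
      · rw [hFT v hv1 hv2 hv3]; have := hCT ⟨v, hv3⟩; omega
      · rw [hFR v hv1 hv2 hv3]; have := hCR ⟨v, hmem v hv1 hv2 hv3⟩; omega
    have hGcol : G.Colorable (2 * k + 2 * r) :=
      (colorable_iff_exists_bdd_nat_coloring _).mpr
        ⟨Coloring.mk F (fun {u v} h => hFvalid h), hFlt⟩
    -- clique number bound: k + r ≤ ω(G)
    haveI : Fintype ↥H := Fintype.ofFinite _
    haveI : Fintype ↥Rs := Fintype.ofFinite _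
    obtain ⟨s, hs⟩ := (G.induce H).exists_isNClique_cliqueNum
    obtain ⟨t, ht⟩ := (G.induce Rs).exists_isNClique_cliqueNum
    set s' : Finset V := s.map (Function.Embedding.subtype _) with hs'
    set t' : Finset V := t.map (Function.Embedding.subtype _) with ht'
    have hmemH : ∀ a ∈ s', a ∈ H := by
      intro a ha
      simp only [hs', Finset.mem_map, Function.Embedding.coe_subtype] at ha
      obtain ⟨x, _, rfl⟩ := ha
      exact x.2
    have hmemR : ∀ a ∈ t', a ∈ Rs := by
      intro a ha
      simp only [ht', Finset.mem_map, Function.Embedding.coe_subtype] at ha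
      obtain ⟨x, _, rfl⟩ := ha
      exact x.2
    have hdisj : Disjoint s' t' := by
      rw [Finset.disjoint_left]
      intro a has hat
      exact (hmemR a hat).1 (hmemH a has)
    have hclique : G.IsClique (↑(s' ∪ t') : Set V) := by
      intro a ha b hb hne
      simp only [Finset.coe_union, Set.mem_union, Finset.mem_coe] at ha hb
      rcases ha with ha | ha <;> rcases hb with hb | hb
      · simp only [hs', Finset.mem_map, Function.Embedding.coe_subtype] at ha hb
        obtain ⟨x, hx, rfl⟩ := ha
        obtain ⟨y, hy, rfl⟩ := hb
        exact hs.isClique hx hy (fun h => hne (by rw [h]))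
      · exact ((hmemR b hb).2 a (hmemH a ha)).symm
      · exact (hmemR a ha).2 b (hmemH b hb)
      · simp only [ht', Finset.mem_map, Function.Embedding.coe_subtype] at ha hb
        obtain ⟨x, hx, rfl⟩ := ha
        obtain ⟨y, hy, rfl⟩ := hb
        exact ht.isClique hx hy (fun h => hne (by rw [h]))
    have hkr : k + r ≤ G.cliqueNum := by
      have hcard : (s' ∪ t').card = k + r := by
        rw [Finset.card_union_of_disjoint hdisj, hs', ht', Finset.card_map,
          Finset.card_map, hs.card_eq, ht.card_eq]
      calc k + r = (s' ∪ t').card := hcard.symm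
        _ ≤ G.cliqueNum := hclique.card_le_cliqueNum
    -- conclusion
    have hchrom : G.chromaticNumber ≤ ((2 * k + 2 * r : ℕ) : ℕ∞) :=
      chromaticNumber_le_iff_colorable.mpr hGcol
    have hle : ((2 * k + 2 * r : ℕ) : ℕ∞) ≤ 2 * (G.cliqueNum : ℕ∞) := by
      have h2 : (2 * k + 2 * r : ℕ) = 2 * (k + r) := by ring
      rw [h2]
      push_cast
      have : ((k : ℕ∞) + r) ≤ (G.cliqueNum : ℕ∞) := by exact_mod_cast hkr
      calc 2 * ((k : ℕ∞) + r) ≤ 2 * (G.cliqueNum : ℕ∞) := mul_le_mul_right this 2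
        _ = 2 * (G.cliqueNum : ℕ∞) := rfl
    exact absurd (hG.trans_le (hchrom.trans hle)) (lt_irrefl _)
end

section
/- Let G be a (P3 ∪ P2, house)-free graph containing vertices v1, v2, v3, v4 that induce a 2K2 with v1 adjacent to v2 and v3 adjacent to v4. For S ⊆ {1,2,3,4}, let N_S be the set of vertices outside {v1,v2,v3,v4} whose neighbors among {v1,v2,v3,v4} are exactly {v_i : i ∈ S}. Let {i,i'} = {1,2} and {j,j'} = {3,4}. Then N_{{i,j}} is anticomplete to N_{{i,j'}} ∪ N_{{i',j}} ∪ N_{{i,i',j'}} ∪ N_{{i',j,j'}} (no edges between them), and N_{{i,j}} is complete to N_{{i,i',j}} ∪ N_{{i,j,j'}} ∪ N_{{1,2,3,4}} (all edges between them present). -/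
open SimpleGraph

/-- The four distinct vertices `v 0, v 1, v 2, v 3` induce a `2K₂` in `G`,
with edges `v 0 — v 1` and `v 2 — v 3` (here `v 0, v 1, v 2, v 3` play the roles of
`v₁, v₂, v₃, v₄`). -/
def Induces2K2 {V : Type*} (G : SimpleGraph V) (v : Fin 4 → V) : Prop :=
  Function.Injective v ∧ G.Adj (v 0) (v 1) ∧ G.Adj (v 2) (v 3) ∧
  ¬ G.Adj (v 0) (v 2) ∧ ¬ G.Adj (v 0) (v 3) ∧ ¬ G.Adj (v 1) (v 2) ∧ ¬ G.Adj (v 1) (v 3)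

/-- `NS G v S` is the set of vertices outside `{v 0, v 1, v 2, v 3}` that are adjacent
to `v i` exactly for the indices `i ∈ S`. -/
def NS {V : Type*} (G : SimpleGraph V) (v : Fin 4 → V) (S : Finset (Fin 4)) : Set V :=
  {u | (∀ i, u ≠ v i) ∧ ∀ i, G.Adj u (v i) ↔ i ∈ S}

/-- `X` is anticomplete to `Y`: there is no edge between `X` and `Y`. -/
def Anticomplete {V : Type*} (G : SimpleGraph V) (X Y : Set V) : Prop :=
  ∀ x ∈ X, ∀ y ∈ Y, ¬ G.Adj x y

/-- `X` is complete to `Y`: every vertex of `X` is adjacent to every vertex of `Y`. -/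
def CompleteTo {V : Type*} (G : SimpleGraph V) (X Y : Set V) : Prop :=
  ∀ x ∈ X, ∀ y ∈ Y, G.Adj x y

lemma house_adj' (u w : Fin 5) : house.Adj u w ↔ u ≠ w ∧ ¬((u:ℕ) + 1 = w ∨ (w:ℕ) + 1 = u) := by
  simp [house, compl_adj, pathGraph_adj]

lemma inj5 {V : Type*} {p : Fin 5 → V} (h01 : p 0 ≠ p 1) (h02 : p 0 ≠ p 2) (h03 : p 0 ≠ p 3)
    (h04 : p 0 ≠ p 4) (h12 : p 1 ≠ p 2) (h13 : p 1 ≠ p 3) (h14 : p 1 ≠ p 4)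
    (h23 : p 2 ≠ p 3) (h24 : p 2 ≠ p 4) (h34 : p 3 ≠ p 4) : Function.Injective p := by
  intro u w h
  fin_cases u <;> fin_cases w <;>
    first | rfl | exact absurd h (by assumption) | exact absurd h.symm (by assumption)

lemma house_free_no {V : Type*} (G : SimpleGraph V) (h2 : IsInducedFree G house)
    (p : Fin 5 → V) (inj : Function.Injective p)
    (e02 : G.Adj (p 0) (p 2)) (e03 : G.Adj (p 0) (p 3)) (e04 : G.Adj (p 0) (p 4))
    (e13 : G.Adj (p 1) (p 3)) (e14 : G.Adj (p 1) (p 4)) (e24 : G.Adj (p 2) (p 4))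
    (n01 : ¬ G.Adj (p 0) (p 1)) (n12 : ¬ G.Adj (p 1) (p 2))
    (n23 : ¬ G.Adj (p 2) (p 3)) (n34 : ¬ G.Adj (p 3) (p 4)) : False := by
  refine h2.false ⟨⟨p, inj⟩, ?_⟩
  intro u w
  rw [house_adj']
  fin_cases u <;> fin_cases w <;> constructor <;> intro h <;>
    first
      | decide
      | exact absurd h (by decide)
      | exact (h.ne rfl).elim
      | assumption
      | exact e02.symm
      | exact e03.symm
      | exact e04.symm
      | exact e13.symm
      | exact e14.symm
      | exact e24.symm
      | exact absurd h n01
      | exact absurd h.symm n01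
      | exact absurd h n12
      | exact absurd h.symm n12
      | exact absurd h n23
      | exact absurd h.symm n23
      | exact absurd h n34
      | exact absurd h.symm n34

lemma L1 {V : Type*} (G : SimpleGraph V) (h2 : IsInducedFree G house) {a c d x y : V}
    (xa : x ≠ a) (xc : x ≠ c) (xd : x ≠ d)
    (ya : y ≠ a) (yc : y ≠ c) (yd : y ≠ d)
    (ad' : a ≠ d) (cd' : c ≠ d) (ac' : a ≠ c)
    (hcd : G.Adj c d)
    (hxa : G.Adj x a) (hxc : G.Adj x c)
    (hya : G.Adj y a) (hyd : G.Adj y d)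
    (nxd : ¬G.Adj x d) (nad : ¬G.Adj a d) (nac : ¬G.Adj a c) (nyc : ¬G.Adj y c) :
    ¬ G.Adj x y := by
  intro hxy
  exact house_free_no G h2 ![x, d, a, c, y]
    (inj5 xd xa xc hxy.ne (fun h => ad' h.symm) (fun h => cd' h.symm) (fun h => yd h.symm)
      ac' (fun h => ya h.symm) (fun h => yc h.symm))
    hxa hxc hxy hcd.symm hyd.symm hya.symm nxd (fun h => nad h.symm) nac (fun h => nyc h.symm)

lemma L3 {V : Type*} (G : SimpleGraph V) (h2 : IsInducedFree G house) {a b c x y : V}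
    (xa : x ≠ a) (xb : x ≠ b) (xc : x ≠ c)
    (ya : y ≠ a) (yb : y ≠ b) (yc : y ≠ c)
    (ab' : a ≠ b) (ac' : a ≠ c) (bc' : b ≠ c)
    (hab : G.Adj a b)
    (hxa : G.Adj x a) (hxc : G.Adj x c)
    (hya : G.Adj y a) (hyb : G.Adj y b) (hyc : G.Adj y c)
    (nac : ¬G.Adj a c) (nbc : ¬G.Adj b c) (nxb : ¬G.Adj x b) :
    G.Adj x y := by
  by_contra nxy
  have xy : x ≠ y := fun h => nxb (by rw [h]; exact hyb)
  exact house_free_no G h2 ![a, c, b, x, y]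
    (inj5 ac' ab' (fun h => xa h.symm) (fun h => ya h.symm) (fun h => bc' h.symm)
      (fun h => xc h.symm) (fun h => yc h.symm) (fun h => xb h.symm) (fun h => yb h.symm) xy)
    hab hxa.symm hya.symm hxc.symm hyc.symm hyb.symm nac (fun h => nbc h.symm)
    (fun h => nxb h.symm) nxy

lemma mid {V : Type*} (G : SimpleGraph V) (h2 : IsInducedFree G house) {a b c d x y : V}
    (nab : a ≠ b) (nac' : a ≠ c) (nad' : a ≠ d) (nbc' : b ≠ c) (nbd' : b ≠ d) (ncd' : c ≠ d)
    (hab : G.Adj a b) (hcd : G.Adj c d)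
    (gac : ¬G.Adj a c) (gad : ¬G.Adj a d) (gbc : ¬G.Adj b c) (gbd : ¬G.Adj b d)
    (hxa : G.Adj x a) (hxc : G.Adj x c) (nxb : ¬G.Adj x b) (nxd : ¬G.Adj x d)
    (xa : x ≠ a) (xb : x ≠ b) (xc : x ≠ c) (xd : x ≠ d)
    (ya : y ≠ a) (yb : y ≠ b) (yc : y ≠ c) (yd : y ≠ d) :
    (G.Adj y a → ¬G.Adj y c → G.Adj y d → ¬G.Adj x y) ∧
    (¬G.Adj y a → G.Adj y b → G.Adj y c → ¬G.Adj x y) ∧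
    (G.Adj y a → G.Adj y b → G.Adj y c → G.Adj x y) ∧
    (G.Adj y a → G.Adj y c → G.Adj y d → G.Adj x y) := by
  refine ⟨?_, ?_, ?_, ?_⟩
  · intro u1 u2 u3
    exact L1 G h2 xa xc xd ya yc yd nad' ncd' nac' hcd hxa hxc u1 u3 nxd gad gac u2
  · intro u1 u2 u3
    exact L1 G h2 xc xa xb yc ya yb (fun h => nbc' h.symm) nab
      (fun h => nac' h.symm) hab hxc hxa u3 u2 nxb (fun h => gbc h.symm)
      (fun h => gac h.symm) u1
  · intro u1 u2 u3
    exact L3 G h2 xa xb xc ya yb yc nab nac' nbc' hab hxa hxc u1 u2 u3 gac gbc nxb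
  · intro u1 u2 u3
    exact L3 G h2 xc xd xa yc yd ya ncd' (fun h => nac' h.symm) (fun h => nad' h.symm)
      hcd hxc hxa u2 u3 u1 (fun h => gac h.symm) (fun h => gad h.symm) nxd

lemma case_all {V : Type*} (G : SimpleGraph V) (h2 : IsInducedFree G house) (v : Fin 4 → V)
    {I I' J J' : Fin 4}
    (hII : I ≠ I') (hIJ : I ≠ J) (hIJ' : I ≠ J') (hI'J : I' ≠ J) (hI'J' : I' ≠ J')
    (hJJ : J ≠ J') (hinj : Function.Injective v)
    (hab : G.Adj (v I) (v I')) (hcd : G.Adj (v J) (v J'))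
    (gac : ¬G.Adj (v I) (v J)) (gad : ¬G.Adj (v I) (v J'))
    (gbc : ¬G.Adj (v I') (v J)) (gbd : ¬G.Adj (v I') (v J')) :
    Anticomplete G (NS G v {I, J})
      (NS G v {I, J'} ∪ NS G v {I', J} ∪ NS G v {I, I', J'} ∪ NS G v {I', J, J'}) ∧
    CompleteTo G (NS G v {I, J})
      (NS G v {I, I', J} ∪ NS G v {I, J, J'} ∪ NS G v {0, 1, 2, 3}) := by
  have mem2a : ∀ k l : Fin 4, k ∈ ({k, l} : Finset (Fin 4)) := fun k l =>
    Finset.mem_insert_self k _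
  have mem2b : ∀ k l : Fin 4, l ∈ ({k, l} : Finset (Fin 4)) := fun k l =>
    Finset.mem_insert_of_mem (Finset.mem_singleton_self l)
  have mem3a : ∀ k l m : Fin 4, k ∈ ({k, l, m} : Finset (Fin 4)) := fun k l m =>
    Finset.mem_insert_self k _
  have mem3b : ∀ k l m : Fin 4, l ∈ ({k, l, m} : Finset (Fin 4)) := fun k l m =>
    Finset.mem_insert_of_mem (Finset.mem_insert_self l _)
  have mem3c : ∀ k l m : Fin 4, m ∈ ({k, l, m} : Finset (Fin 4)) := fun k l m =>
    Finset.mem_insert_of_mem (Finset.mem_insert_of_mem (Finset.mem_singleton_self m))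
  have nmem2 : ∀ k l m : Fin 4, k ≠ l → k ≠ m → k ∉ ({l, m} : Finset (Fin 4)) := by
    intro k l m h1 h2'; simp [h1, h2']
  have nmem3 : ∀ k l m n : Fin 4, k ≠ l → k ≠ m → k ≠ n →
      k ∉ ({l, m, n} : Finset (Fin 4)) := by
    intro k l m n h1 h2' h3; simp [h1, h2', h3]
  have univ4 : ∀ k : Fin 4, k ∈ ({0, 1, 2, 3} : Finset (Fin 4)) := by decide
  constructor
  · intro x hx y hy
    obtain ⟨hx1, hx2⟩ := hx
    have hxa : G.Adj x (v I) := (hx2 I).mpr (mem2a I J)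
    have hxc : G.Adj x (v J) := (hx2 J).mpr (mem2b I J)
    have nxb : ¬G.Adj x (v I') := fun h => nmem2 I' I J hII.symm hI'J ((hx2 I').mp h)
    have nxd : ¬G.Adj x (v J') := fun h => nmem2 J' I J hIJ'.symm hJJ.symm ((hx2 J').mp h)
    simp only [Set.mem_union] at hy
    obtain ((hy | hy) | hy) | hy := hy <;> obtain ⟨hy1, hy2⟩ := hy
    · have M := mid G h2 (fun h => hII (hinj h)) (fun h => hIJ (hinj h))
        (fun h => hIJ' (hinj h)) (fun h => hI'J (hinj h)) (fun h => hI'J' (hinj h))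
        (fun h => hJJ (hinj h)) hab hcd gac gad gbc gbd hxa hxc nxb nxd
        (hx1 I) (hx1 I') (hx1 J) (hx1 J') (hy1 I) (hy1 I') (hy1 J) (hy1 J')
      exact M.1 ((hy2 I).mpr (mem2a I J'))
        (fun h => nmem2 J I J' hIJ.symm hJJ ((hy2 J).mp h))
        ((hy2 J').mpr (mem2b I J'))
    · have M := mid G h2 (fun h => hII (hinj h)) (fun h => hIJ (hinj h))
        (fun h => hIJ' (hinj h)) (fun h => hI'J (hinj h)) (fun h => hI'J' (hinj h))
        (fun h => hJJ (hinj h)) hab hcd gac gad gbc gbd hxa hxc nxb nxd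
        (hx1 I) (hx1 I') (hx1 J) (hx1 J') (hy1 I) (hy1 I') (hy1 J) (hy1 J')
      exact M.2.1 (fun h => nmem2 I I' J hII hIJ ((hy2 I).mp h))
        ((hy2 I').mpr (mem2a I' J)) ((hy2 J).mpr (mem2b I' J))
    · have M := mid G h2 (fun h => hII (hinj h)) (fun h => hIJ (hinj h))
        (fun h => hIJ' (hinj h)) (fun h => hI'J (hinj h)) (fun h => hI'J' (hinj h))
        (fun h => hJJ (hinj h)) hab hcd gac gad gbc gbd hxa hxc nxb nxd
        (hx1 I) (hx1 I') (hx1 J) (hx1 J') (hy1 I) (hy1 I') (hy1 J) (hy1 J')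
      exact M.1 ((hy2 I).mpr (mem3a I I' J'))
        (fun h => nmem3 J I I' J' hIJ.symm hI'J.symm hJJ ((hy2 J).mp h))
        ((hy2 J').mpr (mem3c I I' J'))
    · have M := mid G h2 (fun h => hII (hinj h)) (fun h => hIJ (hinj h))
        (fun h => hIJ' (hinj h)) (fun h => hI'J (hinj h)) (fun h => hI'J' (hinj h))
        (fun h => hJJ (hinj h)) hab hcd gac gad gbc gbd hxa hxc nxb nxd
        (hx1 I) (hx1 I') (hx1 J) (hx1 J') (hy1 I) (hy1 I') (hy1 J) (hy1 J')
      exact M.2.1 (fun h => nmem3 I I' J J' hII hIJ hIJ' ((hy2 I).mp h))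
        ((hy2 I').mpr (mem3a I' J J')) ((hy2 J).mpr (mem3b I' J J'))
  · intro x hx y hy
    obtain ⟨hx1, hx2⟩ := hx
    have hxa : G.Adj x (v I) := (hx2 I).mpr (mem2a I J)
    have hxc : G.Adj x (v J) := (hx2 J).mpr (mem2b I J)
    have nxb : ¬G.Adj x (v I') := fun h => nmem2 I' I J hII.symm hI'J ((hx2 I').mp h)
    have nxd : ¬G.Adj x (v J') := fun h => nmem2 J' I J hIJ'.symm hJJ.symm ((hx2 J').mp h)
    simp only [Set.mem_union] at hy
    obtain (hy | hy) | hy := hy <;> obtain ⟨hy1, hy2⟩ := hy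
    · have M := mid G h2 (fun h => hII (hinj h)) (fun h => hIJ (hinj h))
        (fun h => hIJ' (hinj h)) (fun h => hI'J (hinj h)) (fun h => hI'J' (hinj h))
        (fun h => hJJ (hinj h)) hab hcd gac gad gbc gbd hxa hxc nxb nxd
        (hx1 I) (hx1 I') (hx1 J) (hx1 J') (hy1 I) (hy1 I') (hy1 J) (hy1 J')
      exact M.2.2.1 ((hy2 I).mpr (mem3a I I' J)) ((hy2 I').mpr (mem3b I I' J))
        ((hy2 J).mpr (mem3c I I' J))
    · have M := mid G h2 (fun h => hII (hinj h)) (fun h => hIJ (hinj h))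
        (fun h => hIJ' (hinj h)) (fun h => hI'J (hinj h)) (fun h => hI'J' (hinj h))
        (fun h => hJJ (hinj h)) hab hcd gac gad gbc gbd hxa hxc nxb nxd
        (hx1 I) (hx1 I') (hx1 J) (hx1 J') (hy1 I) (hy1 I') (hy1 J) (hy1 J')
      exact M.2.2.2 ((hy2 I).mpr (mem3a I J J')) ((hy2 J).mpr (mem3b I J J'))
        ((hy2 J').mpr (mem3c I J J'))
    · have M := mid G h2 (fun h => hII (hinj h)) (fun h => hIJ (hinj h))
        (fun h => hIJ' (hinj h)) (fun h => hI'J (hinj h)) (fun h => hI'J' (hinj h))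
        (fun h => hJJ (hinj h)) hab hcd gac gad gbc gbd hxa hxc nxb nxd
        (hx1 I) (hx1 I') (hx1 J) (hx1 J') (hy1 I) (hy1 I') (hy1 J) (hy1 J')
      exact M.2.2.1 ((hy2 I).mpr (univ4 I)) ((hy2 I').mpr (univ4 I'))
        ((hy2 J).mpr (univ4 J))

theorem lemma_c0_first_part
    {V : Type*} [Fintype V] (G : SimpleGraph V)
    (h1 : IsInducedFree G P3uP2) (h2 : IsInducedFree G house)
    (v : Fin 4 → V) (h2k2 : Induces2K2 G v)
    (i i' j j' : Fin 4)
    (hii' : ({i, i'} : Finset (Fin 4)) = {0, 1})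
    (hjj' : ({j, j'} : Finset (Fin 4)) = {2, 3}) :
    Anticomplete G (NS G v {i, j})
      (NS G v {i, j'} ∪ NS G v {i', j} ∪ NS G v {i, i', j'} ∪ NS G v {i', j, j'}) ∧
    CompleteTo G (NS G v {i, j})
      (NS G v {i, i', j} ∪ NS G v {i, j, j'} ∪ NS G v {0, 1, 2, 3}) := by
  obtain ⟨hinj, h01, h23, n02, n03, n12, n13⟩ := h2k2
  have hi : i = 0 ∨ i = 1 := by
    have : i ∈ ({0, 1} : Finset (Fin 4)) := hii' ▸ Finset.mem_insert_self i {i'}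
    simpa using this
  have hi' : i' = 0 ∨ i' = 1 := by
    have : i' ∈ ({0, 1} : Finset (Fin 4)) :=
      hii' ▸ Finset.mem_insert_of_mem (Finset.mem_singleton_self i')
    simpa using this
  have hj : j = 2 ∨ j = 3 := by
    have : j ∈ ({2, 3} : Finset (Fin 4)) := hjj' ▸ Finset.mem_insert_self j {j'}
    simpa using this
  have hj' : j' = 2 ∨ j' = 3 := by
    have : j' ∈ ({2, 3} : Finset (Fin 4)) :=
      hjj' ▸ Finset.mem_insert_of_mem (Finset.mem_singleton_self j')
    simpa using this
  rcases hi with rfl | rfl <;> rcases hi' with rfl | rfl <;>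
    rcases hj with rfl | rfl <;> rcases hj' with rfl | rfl <;>
    first
      | exact absurd hii' (by decide)
      | exact absurd hjj' (by decide)
      | exact case_all G h2 v (by decide) (by decide) (by decide) (by decide) (by decide)
          (by decide) hinj h01 h23 n02 n03 n12 n13
      | exact case_all G h2 v (by decide) (by decide) (by decide) (by decide) (by decide)
          (by decide) hinj h01 h23.symm n03 n02 n13 n12
      | exact case_all G h2 v (by decide) (by decide) (by decide) (by decide) (by decide)
          (by decide) hinj h01.symm h23 n12 n13 n02 n03
      | exact case_all G h2 v (by decide) (by decide) (by decide) (by decide) (by decide)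
          (by decide) hinj h01.symm h23.symm n13 n12 n03 n02
end

section
/- Let G be a (P3 ∪ P2, house)-free graph such that every proper induced subgraph G' of G satisfies χ(G') ≤ 2ω(G'), while χ(G) > 2ω(G), and suppose v1, v2, v3, v4 induce a 2K2 in G with edges v1v2 and v3v4. Then for every S ⊆ {1,2,3,4} with |S| = 3, the induced subgraph G[N_S] is P3-free (equivalently, a disjoint union of cliques). -/
open SimpleGraph

lemma house_contra {V : Type*} {G : SimpleGraph V} (h2 : IsInducedFree G house)
    (x0 x1 x2 x3 x4 : V)
    (e02 : G.Adj x0 x2) (e03 : G.Adj x0 x3) (e04 : G.Adj x0 x4)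
    (e13 : G.Adj x1 x3) (e14 : G.Adj x1 x4) (e24 : G.Adj x2 x4)
    (n01 : ¬ G.Adj x0 x1) (n12 : ¬ G.Adj x1 x2) (n23 : ¬ G.Adj x2 x3) (n34 : ¬ G.Adj x3 x4)
    (d01 : x0 ≠ x1) (d12 : x1 ≠ x2) (d23 : x2 ≠ x3) (d34 : x3 ≠ x4) : False := by
  have e20 := e02.symm; have e30 := e03.symm; have e40 := e04.symm
  have e31 := e13.symm; have e41 := e14.symm; have e42 := e24.symm
  have n10 : ¬ G.Adj x1 x0 := fun h => n01 h.symm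
  have n21 : ¬ G.Adj x2 x1 := fun h => n12 h.symm
  have n32 : ¬ G.Adj x3 x2 := fun h => n23 h.symm
  have n43 : ¬ G.Adj x4 x3 := fun h => n34 h.symm
  have d10 := d01.symm; have d21 := d12.symm; have d32 := d23.symm; have d43 := d34.symm
  have d02 := e02.ne; have d03 := e03.ne; have d04 := e04.ne
  have d13 := e13.ne; have d14 := e14.ne; have d24 := e24.ne
  have d20 := d02.symm; have d30 := d03.symm; have d40 := d04.symm
  have d31 := d13.symm; have d41 := d14.symm; have d42 := d24.symm
  refine h2.elim ⟨⟨![x0,x1,x2,x3,x4], ?_⟩, ?_⟩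
  · intro i j h
    fin_cases i <;> fin_cases j <;> simp_all
  · intro i j
    show G.Adj (![x0,x1,x2,x3,x4] i) (![x0,x1,x2,x3,x4] j) ↔ house.Adj i j
    fin_cases i <;> fin_cases j <;>
      simp_all [house, SimpleGraph.pathGraph_adj, SimpleGraph.irrefl] <;> decide

lemma p3up2_contra {V : Type*} {G : SimpleGraph V} (h1 : IsInducedFree G P3uP2)
    (x0 x1 x2 x3 x4 : V)
    (e01 : G.Adj x0 x1) (e12 : G.Adj x1 x2) (e34 : G.Adj x3 x4)
    (n02 : ¬ G.Adj x0 x2) (n03 : ¬ G.Adj x0 x3) (n04 : ¬ G.Adj x0 x4)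
    (n13 : ¬ G.Adj x1 x3) (n14 : ¬ G.Adj x1 x4)
    (n23 : ¬ G.Adj x2 x3) (n24 : ¬ G.Adj x2 x4)
    (d02 : x0 ≠ x2) (d03 : x0 ≠ x3) (d04 : x0 ≠ x4)
    (d13 : x1 ≠ x3) (d14 : x1 ≠ x4) (d23 : x2 ≠ x3) (d24 : x2 ≠ x4) : False := by
  have e10 := e01.symm; have e21 := e12.symm; have e43 := e34.symm
  have n20 : ¬ G.Adj x2 x0 := fun h => n02 h.symm
  have n30 : ¬ G.Adj x3 x0 := fun h => n03 h.symm
  have n40 : ¬ G.Adj x4 x0 := fun h => n04 h.symm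
  have n31 : ¬ G.Adj x3 x1 := fun h => n13 h.symm
  have n41 : ¬ G.Adj x4 x1 := fun h => n14 h.symm
  have n32 : ¬ G.Adj x3 x2 := fun h => n23 h.symm
  have n42 : ¬ G.Adj x4 x2 := fun h => n24 h.symm
  have d20 := d02.symm; have d30 := d03.symm; have d40 := d04.symm
  have d31 := d13.symm; have d41 := d14.symm; have d32 := d23.symm; have d42 := d24.symm
  have d01 := e01.ne; have d12 := e12.ne; have d34 := e34.ne
  have d10 := d01.symm; have d21 := d12.symm; have d43 := d34.symm
  refine h1.elim ⟨⟨![x0,x1,x2,x3,x4], ?_⟩, ?_⟩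
  · intro i j h
    fin_cases i <;> fin_cases j <;> simp_all
  · intro i j
    show G.Adj (![x0,x1,x2,x3,x4] i) (![x0,x1,x2,x3,x4] j) ↔ P3uP2.Adj i j
    fin_cases i <;> fin_cases j <;>
      simp_all [P3uP2, SimpleGraph.fromEdgeSet_adj, Sym2.eq_iff, SimpleGraph.irrefl]

lemma cliqueNum_induce_le {V : Type*} [Fintype V] (G : SimpleGraph V) (s : Set V) :
    (G.induce s).cliqueNum ≤ G.cliqueNum := by
  classical
  have : Fintype ↥s := Fintype.ofFinite _
  obtain ⟨t, ht⟩ := (G.induce s).exists_isNClique_cliqueNum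
  have hc : G.IsClique (t.map ⟨Subtype.val, Subtype.val_injective⟩ : Finset V) := by
    intro x hx y hy hxy
    simp only [Finset.coe_map, Set.mem_image, Finset.mem_coe, Function.Embedding.coeFn_mk] at hx hy
    obtain ⟨p, hp, rfl⟩ := hx
    obtain ⟨q, hq, rfl⟩ := hy
    have hpq : p ≠ q := fun h => hxy (congrArg _ h)
    exact ht.isClique hp hq hpq
  have hcard : (t.map ⟨Subtype.val, Subtype.val_injective⟩).card = (G.induce s).cliqueNum := by
    rw [Finset.card_map, ht.card_eq]
  calc (G.induce s).cliqueNum = _ := hcard.symm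
    _ ≤ G.cliqueNum := IsClique.card_le_cliqueNum (tc := hc)

lemma dominated_contra {V : Type*} [Fintype V] (G : SimpleGraph V)
    (hmin : ∀ s : Set V, s ≠ Set.univ →
      (G.induce s).chromaticNumber ≤ 2 * ((G.induce s).cliqueNum : ℕ∞))
    (hG : 2 * (G.cliqueNum : ℕ∞) < G.chromaticNumber)
    (w a : V) (hne : a ≠ w)
    (hdom : ∀ z, G.Adj w z → G.Adj a z) : False := by
  classical
  set s : Set V := {x | x ≠ w} with hs_def
  have hws : w ∉ s := by simp [hs_def]
  have hs : s ≠ Set.univ := fun h => hws (h ▸ Set.mem_univ w)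
  have himp : ∀ n, (G.induce s).Colorable n → G.Colorable n := by
    rintro n ⟨C⟩
    refine ⟨Coloring.mk (fun x => if h : x = w then C ⟨a, hne⟩ else C ⟨x, h⟩) ?_⟩
    intro x y hadj
    by_cases hx : x = w <;> by_cases hy : y = w
    · exact absurd hadj (by rw [hx, hy]; exact G.irrefl)
    · simp only [dif_pos hx, dif_neg hy]
      exact C.valid (by simpa using hdom y (hx ▸ hadj))
    · simp only [dif_neg hx, dif_pos hy]
      exact fun h => (C.valid (by simpa using hdom x (hy ▸ hadj.symm))) h.symm
    · simp only [dif_neg hx, dif_neg hy]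
      exact C.valid (by simpa using hadj)
  have h3 : G.chromaticNumber ≤ (G.induce s).chromaticNumber :=
    chromaticNumber_le_of_forall_imp himp
  have h5 : ((G.induce s).cliqueNum : ℕ∞) ≤ (G.cliqueNum : ℕ∞) :=
    Nat.cast_le.mpr (cliqueNum_induce_le G s)
  have h6 : G.chromaticNumber ≤ 2 * (G.cliqueNum : ℕ∞) :=
    h3.trans ((hmin s hs).trans (mul_le_mul_right h5 2))
  exact absurd h6 (not_le.mpr hG)

lemma core {V : Type*} [Fintype V] (G : SimpleGraph V)
    (h1 : IsInducedFree G P3uP2) (h2 : IsInducedFree G house)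
    (hmin : ∀ s : Set V, s ≠ Set.univ →
      (G.induce s).chromaticNumber ≤ 2 * ((G.induce s).cliqueNum : ℕ∞))
    (hG : 2 * (G.cliqueNum : ℕ∞) < G.chromaticNumber)
    (v0 v2 v3 a b c : V)
    (h23 : G.Adj v2 v3) (h02 : ¬ G.Adj v0 v2) (h03 : ¬ G.Adj v0 v3)
    (ha0 : G.Adj a v0) (ha2 : G.Adj a v2) (ha3 : ¬ G.Adj a v3)
    (hb0 : G.Adj b v0) (hb2 : G.Adj b v2) (hb3 : ¬ G.Adj b v3)
    (hc0 : G.Adj c v0) (hc2 : G.Adj c v2) (hc3 : ¬ G.Adj c v3)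
    (hab : G.Adj a b) (hbc : G.Adj b c) (hac : ¬ G.Adj a c) (dac : a ≠ c) : False := by
  have dav3 : a ≠ v3 := by intro h; subst h; exact h03 ha0.symm
  have dbv3 : b ≠ v3 := by intro h; subst h; exact h03 hb0.symm
  have dcv3 : c ≠ v3 := by intro h; subst h; exact h03 hc0.symm
  have d30 : v3 ≠ v0 := by intro h; rw [h] at h23; exact h02 h23.symm
  have d02v : v0 ≠ v2 := by intro h; rw [h] at h03; exact h03 h23
  refine dominated_contra G hmin hG v3 a dav3 ?_
  intro z hz
  by_contra hza
  have hza' : ¬ G.Adj z a := fun h => hza h.symm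
  have dza : z ≠ a := by intro h; rw [h] at hz; exact ha3 hz.symm
  have dzb : z ≠ b := by intro h; rw [h] at hz; exact hb3 hz.symm
  have dzc : z ≠ c := by intro h; rw [h] at hz; exact hc3 hz.symm
  have d0z : v0 ≠ z := by intro h; rw [← h] at hz; exact h03 hz.symm
  by_cases hz2 : G.Adj z v2
  · by_cases hz0 : G.Adj z v0
    · exact house_contra h2 z a v3 v0 v2
        hz.symm hz0 hz2 ha0 ha2 h23.symm
        hza' (fun h => ha3 h) (fun h => h03 h.symm) h02
        dza dav3 d30 d02v
    · by_cases hzc : G.Adj z c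
      · exact house_contra h2 v2 v0 z a c
          hz2.symm ha2.symm hc2.symm ha0.symm hc0.symm hzc
          (fun h => h02 h.symm) (fun h => hz0 h.symm) hza' hac
          d02v.symm d0z dza dac
      · exact p3up2_contra h1 a v0 c v3 z
          ha0 hc0.symm hz
          hac ha3 hza (fun h => h03 h) (fun h => hz0 h.symm) hc3 (fun h => hzc h.symm)
          dac dav3 dza.symm (fun h => d30 h.symm) d0z dcv3 dzc.symm
  · have d2z : v2 ≠ z := by intro h; rw [h] at ha2; exact hza ha2
    by_cases hzb : G.Adj z b
    · exact house_contra h2 v2 z a v3 b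
        ha2.symm h23 hb2.symm hz.symm hzb hab
        (fun h => hz2 h.symm) hza' ha3 (fun h => hb3 h.symm)
        d2z dza dav3 dbv3.symm
    · by_cases hzc : G.Adj z c
      · exact house_contra h2 v2 z b v3 c
          hb2.symm h23 hc2.symm hz.symm hzc hbc
          (fun h => hz2 h.symm) hzb hb3 (fun h => hc3 h.symm)
          d2z dzb dbv3 dcv3.symm
      · exact p3up2_contra h1 a b c v3 z
          hab hbc hz
          hac ha3 hza hb3 (fun h => hzb h.symm) hc3 (fun h => hzc h.symm)
          dac dav3 dza.symm dbv3 dzb.symm dcv3 dzc.symm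

theorem F1_NS_card_three_P3_free
    {V : Type*} [Fintype V] (G : SimpleGraph V)
    (h1 : IsInducedFree G P3uP2) (h2 : IsInducedFree G house)
    (hmin : ∀ s : Set V, s ≠ Set.univ →
      (G.induce s).chromaticNumber ≤ 2 * ((G.induce s).cliqueNum : ℕ∞))
    (hG : 2 * (G.cliqueNum : ℕ∞) < G.chromaticNumber)
    (v : Fin 4 → V) (h2k2 : Induces2K2 G v) :
    ∀ S : Finset (Fin 4), S.card = 3 →
      IsInducedFree (G.induce (NS G v S)) (SimpleGraph.pathGraph 3) := by
  obtain ⟨hinj, h01, h23, h02, h03, h12, h13⟩ := h2k2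
  intro S hS
  refine ⟨fun e => ?_⟩
  obtain ⟨hane, haiff⟩ := (e 0).2
  obtain ⟨hbne, hbiff⟩ := (e 1).2
  obtain ⟨hcne, hciff⟩ := (e 2).2
  have hab : G.Adj ↑(e 0) ↑(e 1) := e.map_rel_iff.mpr (by simp [SimpleGraph.pathGraph_adj])
  have hbc : G.Adj ↑(e 1) ↑(e 2) := e.map_rel_iff.mpr (by simp [SimpleGraph.pathGraph_adj])
  have hac : ¬ G.Adj ↑(e 0) ↑(e 2) := fun h => by
    have h' : (G.induce (NS G v S)).Adj (e 0) (e 2) := h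
    have := e.map_rel_iff.mp h'
    simp [SimpleGraph.pathGraph_adj] at this
  have dac : (↑(e 0) : V) ≠ ↑(e 2) :=
    fun h => absurd (e.injective (Subtype.ext h)) (by decide)
  have hScases : S = {0,1,2} ∨ S = {0,1,3} ∨ S = {0,2,3} ∨ S = {1,2,3} :=
    (by decide :
      ∀ T : Finset (Fin 4), T.card = 3 →
        T = {0,1,2} ∨ T = {0,1,3} ∨ T = {0,2,3} ∨ T = {1,2,3}) S hS
  rcases hScases with rfl | rfl | rfl | rfl
  · exact core G h1 h2 hmin hG (v 0) (v 2) (v 3) _ _ _ h23 h02 h03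
      ((haiff 0).mpr (by decide)) ((haiff 2).mpr (by decide))
      (fun h => absurd ((haiff 3).mp h) (by decide))
      ((hbiff 0).mpr (by decide)) ((hbiff 2).mpr (by decide))
      (fun h => absurd ((hbiff 3).mp h) (by decide))
      ((hciff 0).mpr (by decide)) ((hciff 2).mpr (by decide))
      (fun h => absurd ((hciff 3).mp h) (by decide))
      hab hbc hac dac
  · exact core G h1 h2 hmin hG (v 0) (v 3) (v 2) _ _ _ h23.symm h03 h02
      ((haiff 0).mpr (by decide)) ((haiff 3).mpr (by decide))
      (fun h => absurd ((haiff 2).mp h) (by decide))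
      ((hbiff 0).mpr (by decide)) ((hbiff 3).mpr (by decide))
      (fun h => absurd ((hbiff 2).mp h) (by decide))
      ((hciff 0).mpr (by decide)) ((hciff 3).mpr (by decide))
      (fun h => absurd ((hciff 2).mp h) (by decide))
      hab hbc hac dac
  · exact core G h1 h2 hmin hG (v 2) (v 0) (v 1) _ _ _ h01
      (fun h => h02 h.symm) (fun h => h12 h.symm)
      ((haiff 2).mpr (by decide)) ((haiff 0).mpr (by decide))
      (fun h => absurd ((haiff 1).mp h) (by decide))
      ((hbiff 2).mpr (by decide)) ((hbiff 0).mpr (by decide))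
      (fun h => absurd ((hbiff 1).mp h) (by decide))
      ((hciff 2).mpr (by decide)) ((hciff 0).mpr (by decide))
      (fun h => absurd ((hciff 1).mp h) (by decide))
      hab hbc hac dac
  · exact core G h1 h2 hmin hG (v 2) (v 1) (v 0) _ _ _ h01.symm
      (fun h => h12 h.symm) (fun h => h02 h.symm)
      ((haiff 2).mpr (by decide)) ((haiff 1).mpr (by decide))
      (fun h => absurd ((haiff 0).mp h) (by decide))
      ((hbiff 2).mpr (by decide)) ((hbiff 1).mpr (by decide))
      (fun h => absurd ((hbiff 0).mp h) (by decide))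
      ((hciff 2).mpr (by decide)) ((hciff 1).mpr (by decide))
      (fun h => absurd ((hciff 0).mp h) (by decide))
      hab hbc hac dac
end

section
/- Let G be a (P3 ∪ P2)-free graph and suppose v1, v2, v3, v4 induce a 2K2 in G with edges v1v2 and v3v4. Then N_{{1,2}} and N_{{3,4}} are both cliques of G. -/
open SimpleGraph

lemma aux_embed {V : Type*} (G : SimpleGraph V) (a b c d e : V)
    (hab : G.Adj a b) (hbc : G.Adj b c) (hde : G.Adj d e)
    (hac : ¬ G.Adj a c) (had : ¬ G.Adj a d) (hae : ¬ G.Adj a e)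
    (hbd : ¬ G.Adj b d) (hbe : ¬ G.Adj b e)
    (hcd : ¬ G.Adj c d) (hce : ¬ G.Adj c e)
    (nac : a ≠ c) (nad : a ≠ d) (nae : a ≠ e)
    (nbd : b ≠ d) (nbe : b ≠ e) (ncd : c ≠ d) (nce : c ≠ e) :
    Nonempty (P3uP2 ↪g G) := by
  have nab := hab.ne
  have nbc := hbc.ne
  have nde := hde.ne
  refine ⟨⟨⟨![a,b,c,d,e], ?_⟩, ?_⟩⟩
  · intro i j h
    fin_cases i <;> fin_cases j <;> simp_all
  · intro i j
    fin_cases i <;> fin_cases j <;>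
      simp [P3uP2, Sym2.eq, Sym2.rel_iff', G.irrefl] <;>
      first
      | (exact hab) | (exact hab.symm) | (exact hbc) | (exact hbc.symm)
      | (exact hde) | (exact hde.symm)
      | (intro h; first
          | (exact hac h) | (exact hac h.symm)
          | (exact had h) | (exact had h.symm)
          | (exact hae h) | (exact hae h.symm)
          | (exact hbd h) | (exact hbd h.symm)
          | (exact hbe h) | (exact hbe h.symm)
          | (exact hcd h) | (exact hcd h.symm)
          | (exact hce h) | (exact hce h.symm))

theorem F3_N12_N34_cliques
    {V : Type*} [Fintype V] (G : SimpleGraph V)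
    (h1 : IsInducedFree G P3uP2)
    (v : Fin 4 → V) (h2k2 : Induces2K2 G v) :
    G.IsClique (NS G v {0, 1}) ∧ G.IsClique (NS G v {2, 3}) := by
  obtain ⟨hinj, h01, h23, h02, h03, h12, h13⟩ := h2k2
  constructor
  · intro x hx y hy hxy
    by_contra hadj
    obtain ⟨hxne, hxadj⟩ := hx
    obtain ⟨hyne, hyadj⟩ := hy
    exact h1.false (Classical.choice (aux_embed G x (v 0) y (v 2) (v 3)
      ((hxadj 0).2 (by decide)) (((hyadj 0).2 (by decide)).symm) h23
      hadj ((hxadj 2).not.2 (by decide)) ((hxadj 3).not.2 (by decide))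
      h02 h03
      ((hyadj 2).not.2 (by decide)) ((hyadj 3).not.2 (by decide))
      hxy (hxne 2) (hxne 3)
      (fun h => absurd (hinj h) (by decide)) (fun h => absurd (hinj h) (by decide))
      (hyne 2) (hyne 3)))
  · intro x hx y hy hxy
    by_contra hadj
    obtain ⟨hxne, hxadj⟩ := hx
    obtain ⟨hyne, hyadj⟩ := hy
    exact h1.false (Classical.choice (aux_embed G x (v 2) y (v 0) (v 1)
      ((hxadj 2).2 (by decide)) (((hyadj 2).2 (by decide)).symm) h01
      hadj ((hxadj 0).not.2 (by decide)) ((hxadj 1).not.2 (by decide))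
      (fun h => h02 h.symm) (fun h => h12 h.symm)
      ((hyadj 0).not.2 (by decide)) ((hyadj 1).not.2 (by decide))
      hxy (hxne 0) (hxne 1)
      (fun h => absurd (hinj h) (by decide)) (fun h => absurd (hinj h) (by decide))
      (hyne 0) (hyne 1)))
end

section
/- Let G be a (P3 ∪ P2)-free graph and suppose v1, v2, v3, v4 induce a 2K2 in G with edges v1v2 and v3v4. Let A be the set of vertices of G with no neighbor in {v1,v2,v3,v4} (and not in {v1,v2,v3,v4}). Then A is anticomplete to N_{{1,2}} ∪ N_{{3,4}}: there is no edge between A and N_{{1,2}} ∪ N_{{3,4}}. -/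
open SimpleGraph

set_option linter.unreachableTactic false in
set_option linter.unusedTactic false in
lemma embed_P3uP2 {V : Type*} (G : SimpleGraph V) (w : Fin 5 → V)
    (hinj : Function.Injective w)
    (h01 : G.Adj (w 0) (w 1)) (h12 : G.Adj (w 1) (w 2)) (h34 : G.Adj (w 3) (w 4))
    (h02 : ¬ G.Adj (w 0) (w 2)) (h03 : ¬ G.Adj (w 0) (w 3)) (h04 : ¬ G.Adj (w 0) (w 4))
    (h13 : ¬ G.Adj (w 1) (w 3)) (h14 : ¬ G.Adj (w 1) (w 4))
    (h23 : ¬ G.Adj (w 2) (w 3)) (h24 : ¬ G.Adj (w 2) (w 4)) :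
    Nonempty (P3uP2 ↪g G) := by
  refine ⟨⟨⟨w, hinj⟩, ?_⟩⟩
  intro a b
  fin_cases a <;> fin_cases b <;>
    simp_all [P3uP2, SimpleGraph.fromEdgeSet_adj, Sym2.eq_iff, G.adj_comm, hinj.ne_iff] <;>
    first | exact h01 | exact h12 | exact h34 | exact h01.symm | exact h12.symm | exact h34.symm

theorem F4_A_anticomplete_N12_N34
    {V : Type*} [Fintype V] (G : SimpleGraph V)
    (h1 : IsInducedFree G P3uP2)
    (v : Fin 4 → V) (h2k2 : Induces2K2 G v) :
    Anticomplete G (NS G v ∅) (NS G v {0, 1} ∪ NS G v {2, 3}) := by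
  obtain ⟨hvinj, e01, e23, n02, n03, n12, n13⟩ := h2k2
  rintro a ⟨hane, hadj⟩ y (⟨hyne, hyadj⟩ | ⟨hyne, hyadj⟩) hay
  · -- y ∈ N_{0,1}
    have hy0 : G.Adj y (v 0) := (hyadj 0).2 (by decide)
    have hy2 : ¬ G.Adj y (v 2) := fun h => by simpa using (hyadj 2).1 h
    have hy3 : ¬ G.Adj y (v 3) := fun h => by simpa using (hyadj 3).1 h
    have ha : ∀ i, ¬ G.Adj a (v i) := fun i h => by simpa using (hadj i).1 h
    have hne : a ≠ y := fun h => (ha 0) (h ▸ hy0)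
    refine h1.false ?_
    refine (embed_P3uP2 G ![a, y, v 0, v 2, v 3] ?_ hay hy0 e23
      (ha 0) (ha 2) (ha 3) hy2 hy3 n02 n03).some
    have A0 := hane 0; have A1 := hane 1; have A2 := hane 2; have A3 := hane 3
    have Y0 := hyne 0; have Y1 := hyne 1; have Y2 := hyne 2; have Y3 := hyne 3
    intro i j hij
    fin_cases i <;> fin_cases j <;> simp_all [hvinj.eq_iff, eq_comm]
  · -- y ∈ N_{2,3}
    have hy2 : G.Adj y (v 2) := (hyadj 2).2 (by decide)
    have hy0 : ¬ G.Adj y (v 0) := fun h => by simpa using (hyadj 0).1 h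
    have hy1 : ¬ G.Adj y (v 1) := fun h => by simpa using (hyadj 1).1 h
    have ha : ∀ i, ¬ G.Adj a (v i) := fun i h => by simpa using (hadj i).1 h
    have hne : a ≠ y := fun h => (ha 2) (h ▸ hy2)
    refine h1.false ?_
    refine (embed_P3uP2 G ![a, y, v 2, v 0, v 1] ?_ hay hy2 e01
      (ha 2) (ha 0) (ha 1) hy0 hy1 (fun h => n02 h.symm) (fun h => n12 h.symm)).some
    have A0 := hane 0; have A1 := hane 1; have A2 := hane 2; have A3 := hane 3
    have Y0 := hyne 0; have Y1 := hyne 1; have Y2 := hyne 2; have Y3 := hyne 3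
    intro i j hij
    fin_cases i <;> fin_cases j <;> simp_all [hvinj.eq_iff, eq_comm]
end
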